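/- Quantitative conditional form of Theorem 1.2: let θ ≥ 2 be an integer, p ∈ (0,1), and let G be a finite simple graph on vertex set V in which every vertex has degree at most θ+1. Suppose C₁, …, C_m are cycles in G, each of length at most L, such that every vertex of G lies on at least one C_l. Then for every integer T ≥ 1 and every initial infected set X₀ ⊆ V, the threshold-θ contact process on G satisfies P( X_{mT} ≠ ∅ ) ≤ m·(1 − (1−p)^L)^T. In particular, if the cycles covering G have length at most κ log n, the process dies out in time polynomial in n with probability at least 1 − n e^{−n}. -/

import Mathlib

open MeasureTheory ProbabilityTheory

/-- For `W ⊆ V`, `starSet G l W = W^{*l}` is the set of vertices having at least `l`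
neighbors in `W`. -/
noncomputable def starSet {V : Type*} [Fintype V] (G : SimpleGraph V) (l : ℕ)
    (W : Finset V) : Finset V :=
  letI := Classical.dec
  Finset.univ.filter fun v => l ≤ (W.filter fun u => G.Adj v u).card

/-- The discrete-time threshold-`θ` contact process with infection probability `p` and initial
infected set `X0`, driven by the field `ω` of `[0,1]`-valued random variables:
`X_{t+1} = {v ∈ (X_t)^{*θ} : ω(t+1, v) ≤ p}`. -/
noncomputable def tcp {V : Type*} [Fintype V] (G : SimpleGraph V) (θ : ℕ) (p : ℝ)
    (X0 : Finset V) (ω : ℕ × V → ℝ) : ℕ → Finset V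
  | 0 => X0
  | t + 1 =>
      letI := Classical.dec
      (starSet G θ (tcp G θ p X0 ω t)).filter fun v => ω (t + 1, v) ≤ p

/-- `P` is the law of an i.i.d. field of Uniform`[0,1]` random variables indexed by `ℕ × V`,
i.e. the infinite product of uniform measures on `[0,1]`: the coordinate maps are independent
and each is uniformly distributed on `[0,1]`. -/
def IsIIDUniform {V : Type*} (P : Measure ((ℕ × V) → ℝ)) : Prop :=
  IsProbabilityMeasure P ∧
    iIndepFun (fun (i : ℕ × V) (ω : (ℕ × V) → ℝ) => ω i) P ∧
    ∀ i : ℕ × V, P.map (fun ω => ω i) = volume.restrict (Set.Icc (0 : ℝ) 1)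

private lemma support_getElem_eq_getVert {V : Type*} {G : SimpleGraph V} :
    ∀ {u v : V} (p : G.Walk u v) (i : ℕ) (h : i < p.support.length),
      p.support[i] = p.getVert i := by
  intro u v p
  induction p with
  | nil =>
    intro i h
    simp only [SimpleGraph.Walk.support_nil, List.length_singleton] at h
    obtain rfl : i = 0 := by omega
    rfl
  | cons h q ih =>
    intro i hi
    cases i with
    | zero => simp [SimpleGraph.Walk.support_cons, SimpleGraph.Walk.getVert_zero]
    | succ i =>
      simp only [SimpleGraph.Walk.support_cons, List.getElem_cons_succ,
        SimpleGraph.Walk.getVert_cons_succ]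
      exact ih i (by simpa [SimpleGraph.Walk.support_cons] using hi)

private lemma cycle_two_nbrs_start {V : Type*} {G : SimpleGraph V} {v : V}
    {c : G.Walk v v} (hc : c.IsCycle) :
    ∃ a b, a ≠ b ∧ G.Adj v a ∧ G.Adj v b ∧ a ∈ c.support ∧ b ∈ c.support := by
  have hn3 : 3 ≤ c.length := hc.three_le_length
  refine ⟨c.getVert 1, c.getVert (c.length - 1), ?_, ?_, ?_, ?_, ?_⟩
  · intro hab
    have hlt : c.support.tail.length = c.length := by
      rw [List.length_tail, c.length_support]; omega
    have h0 : (0 : ℕ) < c.support.tail.length := by omega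
    have hj : c.length - 2 < c.support.tail.length := by omega
    have key : c.support.tail[0]'h0 = c.support.tail[c.length - 2]'hj := by
      rw [List.getElem_tail, List.getElem_tail,
        support_getElem_eq_getVert, support_getElem_eq_getVert]
      simpa [show c.length - 2 + 1 = c.length - 1 from by omega] using hab
    have := (hc.support_nodup.getElem_inj_iff).mp key
    omega
  · have := c.adj_getVert_succ (i := 0) (by omega)
    simpa using this
  · have h := c.adj_getVert_succ (i := c.length - 1) (by omega)
    rw [show c.length - 1 + 1 = c.length from by omega, c.getVert_length] at h
    exact h.symm
  · exact SimpleGraph.Walk.mem_support_iff_exists_getVert.mpr ⟨1, rfl, by omega⟩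
  · exact SimpleGraph.Walk.mem_support_iff_exists_getVert.mpr ⟨c.length - 1, rfl, by omega⟩

private lemma cycle_two_nbrs {V : Type*} {G : SimpleGraph V} {v u : V}
    {c : G.Walk v v} (hc : c.IsCycle) (hu : u ∈ c.support) :
    ∃ a b, a ≠ b ∧ G.Adj u a ∧ G.Adj u b ∧ a ∈ c.support ∧ b ∈ c.support := by
  classical
  obtain ⟨a, b, hab, ha, hb, haS, hbS⟩ := cycle_two_nbrs_start (hc.rotate hu)
  have hrot := SimpleGraph.Walk.support_rotate c u hu
  have key : ∀ x, G.Adj u x → x ∈ (c.rotate u hu).support → x ∈ c.support := by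
    intro x hadj hx
    have hxne : x ≠ u := hadj.ne'
    rw [SimpleGraph.Walk.support_eq_cons] at hx
    rcases List.mem_cons.mp hx with rfl | h
    · exact absurd rfl hxne
    · exact List.mem_of_mem_tail (hrot.mem_iff.mp h)
  exact ⟨a, b, hab, ha, hb, key a ha haS, key b hb hbS⟩

private lemma not_mem_starSet {V : Type*} [Fintype V] {G : SimpleGraph V}
    [∀ u : V, Fintype (G.neighborSet u)] {θ : ℕ} (hθ : 2 ≤ θ)
    (hdeg : ∀ u : V, G.degree u ≤ θ + 1) {v : V} {c : G.Walk v v} (hc : c.IsCycle)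
    (X : Finset V) (hX : ∀ u ∈ c.support, u ∉ X) :
    ∀ u ∈ c.support, u ∉ starSet G θ X := by
  classical
  intro u hu hstar
  simp only [starSet, Finset.mem_filter, Finset.mem_univ, true_and] at hstar
  obtain ⟨a, b, hab, ha, hb, haS, hbS⟩ := cycle_two_nbrs hc hu
  have hpair : ({a, b} : Finset V) ⊆ G.neighborFinset u := by
    intro w hw
    simp only [Finset.mem_insert, Finset.mem_singleton] at hw
    rcases hw with rfl | rfl <;> simp [SimpleGraph.mem_neighborFinset, ha, hb]
  have h2 : ({a, b} : Finset V).card = 2 := Finset.card_pair hab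
  have hle : θ ≤ (G.neighborFinset u \ {a, b}).card := by
    refine le_trans hstar (Finset.card_le_card ?_)
    intro w hw
    rw [Finset.mem_filter] at hw
    simp only [Finset.mem_sdiff, SimpleGraph.mem_neighborFinset, Finset.mem_insert,
      Finset.mem_singleton]
    refine ⟨hw.2, ?_⟩
    rintro (rfl | rfl)
    · exact hX _ haS hw.1
    · exact hX _ hbS hw.1
  rw [Finset.card_sdiff_of_subset hpair, h2, SimpleGraph.card_neighborFinset_eq_degree] at hle
  have hdu := hdeg u
  have h2le : 2 ≤ G.degree u := by
    have := Finset.card_le_card hpair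
    rwa [h2, SimpleGraph.card_neighborFinset_eq_degree] at this
  omega

/-- Quantitative conditional form of Theorem 1.2: if a graph of maximum degree `θ+1` is covered
by `m` cycles of length at most `L`, then the threshold-`θ` contact process dies out by time
`m·T` except with probability at most `m·(1-(1-p)^L)^T`. -/
theorem tcp_dies_on_cycle_covered_graph {V : Type*} [Fintype V] (G : SimpleGraph V)
    [inst : ∀ u : V, Fintype (G.neighborSet u)]
    (θ : ℕ) (hθ : 2 ≤ θ) (p : ℝ) (hp : p ∈ Set.Ioo (0 : ℝ) 1)
    (hdeg : ∀ u : V, G.degree u ≤ θ + 1)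
    (m L : ℕ) (base : Fin m → V) (C : ∀ l : Fin m, G.Walk (base l) (base l))
    (hcyc : ∀ l, (C l).IsCycle) (hlen : ∀ l, (C l).length ≤ L)
    (hcover : ∀ u : V, ∃ l, u ∈ (C l).support)
    (P : Measure ((ℕ × V) → ℝ)) (hP : IsIIDUniform P)
    (T : ℕ) (hT : 1 ≤ T) (X0 : Finset V) :
    P {ω | tcp G θ p X0 ω (m * T) ≠ ∅} ≤
      ENNReal.ofReal ((m : ℝ) * (1 - (1 - p) ^ L) ^ T) := by
  classical
  obtain ⟨hPprob, hPind, hPmap⟩ := hP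
  haveI := hPprob
  obtain ⟨hp0, hp1⟩ := hp
  set q : ℝ := 1 - p with hq
  have hq0 : 0 ≤ q := by rw [hq]; linarith
  have hq1 : q ≤ 1 := by rw [hq]; linarith
  set r : ℝ := 1 - q ^ L with hrdef
  have hqL1 : q ^ L ≤ 1 := pow_le_one₀ hq0 hq1
  have hqL0 : 0 ≤ q ^ L := pow_nonneg hq0 L
  have hr0 : 0 ≤ r := by rw [hrdef]; linarith
  -- the vertex sets of the cycles
  set S : Fin m → Finset V := fun l => (C l).support.toFinset with hS
  have hSmem : ∀ l u, u ∈ S l ↔ u ∈ (C l).support := by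
    intro l u; simp [hS]
  have hScard : ∀ l, (S l).card ≤ L := by
    intro l
    have h3 : 3 ≤ (C l).length := (hcyc l).three_le_length
    have hlt : (C l).support.tail.length = (C l).length := by
      rw [List.length_tail, (C l).length_support]; omega
    have hidx : (C l).length - 1 < (C l).support.tail.length := by omega
    have hvtail : base l ∈ (C l).support.tail := by
      have he : (C l).support.tail[(C l).length - 1]'hidx = base l := by
        rw [List.getElem_tail, support_getElem_eq_getVert]
        simp [show (C l).length - 1 + 1 = (C l).length from by omega,
          SimpleGraph.Walk.getVert_length]
      have hm := List.getElem_mem hidx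
      rwa [he] at hm
    have hsub : (C l).support.toFinset ⊆ (C l).support.tail.toFinset := by
      intro x hx
      rw [List.mem_toFinset] at hx ⊢
      rw [SimpleGraph.Walk.support_eq_cons] at hx
      rcases List.mem_cons.mp hx with rfl | h
      · exact hvtail
      · exact h
    calc (S l).card ≤ (C l).support.tail.toFinset.card := Finset.card_le_card hsub
      _ ≤ (C l).support.tail.length := List.toFinset_card_le _
      _ = (C l).length := hlt
      _ ≤ L := hlen l
  -- one-step description of the process
  have hstep : ∀ (ω : ℕ × V → ℝ) (t : ℕ) (v : V),
      v ∈ tcp G θ p X0 ω (t + 1) ↔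
        v ∈ starSet G θ (tcp G θ p X0 ω t) ∧ ω (t + 1, v) ≤ p := by
    intro ω t v
    rw [tcp]
    exact Finset.mem_filter
  -- once a cycle is fully healthy, it stays healthy
  have habsorb : ∀ (ω : ℕ × V → ℝ) (l : Fin m) (s : ℕ),
      (∀ u ∈ (C l).support, u ∉ tcp G θ p X0 ω s) →
      ∀ t, s ≤ t → ∀ u ∈ (C l).support, u ∉ tcp G θ p X0 ω t := by
    intro ω l s hs t
    induction t with
    | zero => intro hst; obtain rfl : s = 0 := Nat.le_zero.mp hst; exact hs
    | succ t ih =>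
      intro hst
      rcases Nat.lt_or_ge s (t + 1) with hltc | hgec
      · have ht := ih (by omega)
        intro u hu hmem
        rw [hstep] at hmem
        exact not_mem_starSet hθ hdeg (hcyc l) _ ht u hu hmem.1
      · obtain rfl : s = t + 1 := by omega
        exact hs
  -- the bad events
  set U : ℕ → Fin m → Set ((ℕ × V) → ℝ) :=
    fun s l => {ω | ∃ v ∈ S l, ω (s, v) ≤ p} with hU
  set Bad : Fin m → Set ((ℕ × V) → ℝ) :=
    fun l => ⋂ s ∈ Finset.Ioc ((l : ℕ) * T) ((l : ℕ) * T + T), U s l with hBad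
  -- survival implies some bad event
  have hincl : {ω | tcp G θ p X0 ω (m * T) ≠ ∅} ⊆ ⋃ l : Fin m, Bad l := by
    intro ω hω
    by_contra hnot
    simp only [Set.mem_iUnion, not_exists] at hnot
    refine hω ?_
    have hfail : ∀ l : Fin m, ∀ u ∈ (C l).support, u ∉ tcp G θ p X0 ω (m * T) := by
      intro l
      have hnl : ω ∉ Bad l := hnot l
      rw [hBad] at hnl
      simp only [Set.mem_iInter, not_forall] at hnl
      obtain ⟨s, hsmem, hsU⟩ := hnl
      rw [Finset.mem_Ioc] at hsmem
      obtain ⟨hs1, hs2⟩ := hsmem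
      have hempty : ∀ u ∈ (C l).support, u ∉ tcp G θ p X0 ω s := by
        intro u hu hmem
        obtain ⟨s', rfl⟩ : ∃ s', s = s' + 1 := ⟨s - 1, by omega⟩
        rw [hstep] at hmem
        exact hsU ⟨u, (hSmem l u).mpr hu, hmem.2⟩
      refine habsorb ω l s hempty (m * T) ?_
      have hlm : (l : ℕ) + 1 ≤ m := l.isLt
      have hmul : ((l : ℕ) + 1) * T ≤ m * T := Nat.mul_le_mul_right T hlm
      have hexp : ((l : ℕ) + 1) * T = (l : ℕ) * T + T := by ring
      omega
    refine Finset.eq_empty_iff_forall_notMem.mpr fun u hu => ?_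
    obtain ⟨l, hl⟩ := hcover u
    exact hfail l u hl hu
  -- measurability of U
  have hUmeas : ∀ s l, MeasurableSet (U s l) := by
    intro s l
    have hrw : U s l = ⋃ v ∈ S l, {ω : (ℕ × V) → ℝ | ω (s, v) ≤ p} := by
      ext ω; simp [hU]
    rw [hrw]
    refine Set.Finite.measurableSet_biUnion (S l).finite_toSet fun v _ => ?_
    exact measurableSet_le (measurable_pi_apply _) measurable_const
  -- law of one coordinate
  have hcoord : ∀ i : ℕ × V,
      P ((fun ω : (ℕ × V) → ℝ => ω i) ⁻¹' Set.Ioi p) = ENNReal.ofReal q := by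
    intro i
    have hmeas : Measurable fun ω : (ℕ × V) → ℝ => ω i := measurable_pi_apply i
    rw [← Measure.map_apply hmeas measurableSet_Ioi, hPmap i,
      Measure.restrict_apply measurableSet_Ioi]
    have hinter : Set.Ioi p ∩ Set.Icc (0 : ℝ) 1 = Set.Ioc p 1 := by
      ext x
      simp only [Set.mem_inter_iff, Set.mem_Ioi, Set.mem_Icc, Set.mem_Ioc]
      constructor
      · rintro ⟨h1, _, h3⟩; exact ⟨h1, h3⟩
      · rintro ⟨h1, h2⟩; exact ⟨h1, (hp0.trans h1).le, h2⟩
    rw [hinter, Real.volume_Ioc, hq]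
  -- probability of one bad step event
  have hUprob : ∀ s l, P (U s l) ≤ ENNReal.ofReal r := by
    intro s l
    have hcompl : (U s l)ᶜ =
        ⋂ i ∈ (S l).image (fun v => (s, v)),
          (fun ω : (ℕ × V) → ℝ => ω i) ⁻¹' Set.Ioi p := by
      ext ω
      simp only [Set.mem_compl_iff, hU, Set.mem_setOf_eq, not_exists, not_and, not_le,
        Set.mem_iInter, Finset.mem_image, Set.mem_preimage, Set.mem_Ioi]
      constructor
      · rintro h i ⟨v, hv, rfl⟩
        exact h v hv
      · intro h v hv
        exact h (s, v) ⟨v, hv, rfl⟩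
    have hPcompl : P ((U s l)ᶜ) = ENNReal.ofReal (q ^ (S l).card) := by
      rw [hcompl, hPind.measure_inter_preimage_eq_mul _ (fun i _ => measurableSet_Ioi)]
      rw [Finset.prod_congr rfl fun i _ => hcoord i, Finset.prod_const,
        Finset.card_image_of_injective _ (fun a b h => congrArg Prod.snd h),
        ← ENNReal.ofReal_pow hq0]
    have h1 : P (U s l) = 1 - ENNReal.ofReal (q ^ (S l).card) := by
      have hc := prob_compl_eq_one_sub (μ := P) (hUmeas s l).compl
      rw [compl_compl] at hc
      rw [hc, hPcompl]
    rw [h1]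
    have hk : q ^ L ≤ q ^ (S l).card := pow_le_pow_of_le_one hq0 hq1 (hScard l)
    calc 1 - ENNReal.ofReal (q ^ (S l).card) ≤ 1 - ENNReal.ofReal (q ^ L) :=
          tsub_le_tsub_left (ENNReal.ofReal_le_ofReal hk) 1
      _ = ENNReal.ofReal r := by
          rw [hrdef, ENNReal.ofReal_sub 1 hqL0, ENNReal.ofReal_one]
  -- probability of an intersection over a block of times
  have hblock : ∀ (l : Fin m) (F : Finset ℕ),
      P (⋂ s ∈ F, U s l) ≤ ENNReal.ofReal r ^ F.card := by
    intro l F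
    induction F using Finset.cons_induction with
    | empty => simp
    | cons a F ha ih =>
      have hsplit : (⋂ s ∈ Finset.cons a F ha, U s l) = U a l ∩ ⋂ s ∈ F, U s l := by
        rw [Finset.cons_eq_insert]
        simp [Set.biInter_insert]
      set K1 : Finset (ℕ × V) := {a} ×ˢ S l with hK1
      set K2 : Finset (ℕ × V) := F ×ˢ S l with hK2
      have hdisj : Disjoint K1 K2 := by
        rw [Finset.disjoint_left]
        rintro ⟨s, v⟩ h1 h2
        rw [hK1, Finset.mem_product, Finset.mem_singleton] at h1
        rw [hK2, Finset.mem_product] at h2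
        exact ha (h1.1 ▸ h2.1)
      have hIndep := hPind.indepFun_finset K1 K2 hdisj fun i => measurable_pi_apply i
      set A : Set (K1 → ℝ) := ⋃ i : K1, {x | x i ≤ p} with hA
      set B : Set (K2 → ℝ) :=
        ⋂ s ∈ F, ⋃ i : K2, {x | (i : ℕ × V).1 = s ∧ x i ≤ p} with hB
      have hAmeas : MeasurableSet A := by
        rw [hA]
        exact MeasurableSet.iUnion fun i =>
          measurableSet_le (measurable_pi_apply i) measurable_const
      have hBmeas : MeasurableSet B := by
        rw [hB]
        refine MeasurableSet.biInter (Set.to_countable _) fun s hs => ?_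
        refine MeasurableSet.iUnion fun i => ?_
        by_cases h : (i : ℕ × V).1 = s
        · have hrw : {x : K2 → ℝ | (i : ℕ × V).1 = s ∧ x i ≤ p} = {x | x i ≤ p} := by
            ext x; simp [h]
          rw [hrw]
          exact measurableSet_le (measurable_pi_apply i) measurable_const
        · have hrw : {x : K2 → ℝ | (i : ℕ × V).1 = s ∧ x i ≤ p} = ∅ := by
            ext x; simp [h]
          rw [hrw]
          exact MeasurableSet.empty
      have hg1pre : U a l = (fun (ω : (ℕ × V) → ℝ) (i : K1) => ω i) ⁻¹' A := by
        ext ω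
        simp only [hU, hA, Set.mem_setOf_eq, Set.mem_preimage, Set.mem_iUnion]
        constructor
        · rintro ⟨v, hv, hle⟩
          refine ⟨⟨(a, v), ?_⟩, hle⟩
          rw [hK1, Finset.mem_product, Finset.mem_singleton]
          exact ⟨rfl, hv⟩
        · rintro ⟨⟨⟨s', v⟩, hi⟩, hle⟩
          rw [hK1, Finset.mem_product, Finset.mem_singleton] at hi
          obtain ⟨rfl, hv⟩ := hi
          exact ⟨v, hv, hle⟩
      have hg2pre : (⋂ s ∈ F, U s l) = (fun (ω : (ℕ × V) → ℝ) (i : K2) => ω i) ⁻¹' B := by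
        ext ω
        simp only [hU, hB, Set.mem_iInter, Set.mem_preimage, Set.mem_iUnion,
          Set.mem_setOf_eq]
        constructor
        · intro h s hs
          obtain ⟨v, hv, hle⟩ := h s hs
          refine ⟨⟨(s, v), ?_⟩, rfl, hle⟩
          rw [hK2, Finset.mem_product]
          exact ⟨hs, hv⟩
        · intro h s hs
          obtain ⟨⟨⟨s', v⟩, hi⟩, heq, hle⟩ := h s hs
          cases heq
          rw [hK2, Finset.mem_product] at hi
          exact ⟨v, hi.2, hle⟩
      have hmul := hIndep.measure_inter_preimage_eq_mul A B hAmeas hBmeas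
      rw [hsplit, hg1pre, hg2pre, hmul, ← hg1pre, ← hg2pre]
      calc P (U a l) * P (⋂ s ∈ F, U s l)
          ≤ ENNReal.ofReal r * ENNReal.ofReal r ^ F.card := mul_le_mul' (hUprob a l) ih
        _ = ENNReal.ofReal r ^ (Finset.cons a F ha).card := by
            rw [Finset.card_cons, pow_succ]; ring
  -- put everything together
  calc P {ω | tcp G θ p X0 ω (m * T) ≠ ∅}
      ≤ P (⋃ l : Fin m, Bad l) := measure_mono hincl
    _ ≤ ∑ l : Fin m, P (Bad l) := measure_iUnion_fintype_le P Bad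
    _ ≤ ∑ _l : Fin m, ENNReal.ofReal r ^ T := by
        refine Finset.sum_le_sum fun l _ => ?_
        have hb := hblock l (Finset.Ioc ((l : ℕ) * T) ((l : ℕ) * T + T))
        rwa [Nat.card_Ioc, Nat.add_sub_cancel_left] at hb
    _ = (m : ENNReal) * ENNReal.ofReal r ^ T := by
        rw [Finset.sum_const, Finset.card_univ, Fintype.card_fin, nsmul_eq_mul]
    _ = ENNReal.ofReal ((m : ℝ) * r ^ T) := by
        rw [ENNReal.ofReal_mul (by positivity), ENNReal.ofReal_natCast,
          ENNReal.ofReal_pow hr0]
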